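/- Let H and B' be simple atoms over disjoint variable sets x⃗ and y⃗ respectively, where H is functional (contains at least one functional term) and every functional term in H contains all of x⃗, and either B' is function-free with vars(B') = y⃗, or B' is functional with every functional term containing all of y⃗. If θ is a most general unifier of H and B', then Hθ = B'θ is simple, and for each functional atom A ∈ {H, B'}, the θ-image of every variable of A is non-functional (a variable or constant). -/

import Mathlib

/-! Most general unifiers of simple atoms (as arising in the disjunctive
guarded saturation) produce simple atoms and non-functional variable images. -/

namespace Stmt17

inductive FOTerm (V C F : Type) : Type where
  | var : V → FOTerm V C F
  | const : C → FOTerm V C F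
  | func : F → List (FOTerm V C F) → FOTerm V C F

variable {V C F : Type}

def FOTerm.subst (σ : V → FOTerm V C F) : FOTerm V C F → FOTerm V C F
  | .var x => σ x
  | .const c => .const c
  | .func f ts => .func f (ts.attach.map fun ⟨t, _⟩ => t.subst σ)

def FOTerm.vars : FOTerm V C F → Set V
  | .var x => {x}
  | .const _ => ∅
  | .func _ ts => ((ts.attach.map fun ⟨t, _⟩ => t.vars).foldr (· ∪ ·) ∅)

def FOTerm.NoFunc : FOTerm V C F → Prop
  | .func _ _ => False
  | _ => True

def FOTerm.Functional (t : FOTerm V C F) : Prop := ¬ t.NoFunc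

/-- A shallow term: no nested function applications. -/
def FOTerm.Shallow : FOTerm V C F → Prop
  | .func _ ts => ∀ t ∈ ts, t.NoFunc
  | _ => True

structure FOAtom (V C F R : Type) (ar : R → ℕ) where
  rel : R
  args : Fin (ar rel) → FOTerm V C F

variable {R : Type} {ar : R → ℕ}

def FOAtom.subst (σ : V → FOTerm V C F) (A : FOAtom V C F R ar) : FOAtom V C F R ar :=
  ⟨A.rel, fun i => (A.args i).subst σ⟩

def FOAtom.vars (A : FOAtom V C F R ar) : Set V := ⋃ i, (A.args i).vars

def FOAtom.NoFunc (A : FOAtom V C F R ar) : Prop := ∀ i, (A.args i).NoFunc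

/-- A simple atom: all its arguments are shallow. -/
def FOAtom.Simple (A : FOAtom V C F R ar) : Prop := ∀ i, (A.args i).Shallow

/-- A functional atom: some argument contains a function symbol. -/
def FOAtom.Functional (A : FOAtom V C F R ar) : Prop := ∃ i, (A.args i).Functional

theorem FOTerm.subst_var (σ : V → FOTerm V C F) (x : V) :
    (FOTerm.var x).subst σ = σ x := by simp [FOTerm.subst]

theorem FOTerm.subst_const (σ : V → FOTerm V C F) (c : C) :
    (FOTerm.const c : FOTerm V C F).subst σ = .const c := by simp [FOTerm.subst]

theorem FOTerm.subst_func (σ : V → FOTerm V C F) (f : F) (ts : List (FOTerm V C F)) :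
    (FOTerm.func f ts).subst σ = .func f (ts.map (FOTerm.subst σ)) := by
  simp [FOTerm.subst, List.map_attach_eq_pmap]

theorem mem_foldr_union {l : List (Set V)} {x : V} :
    x ∈ l.foldr (· ∪ ·) ∅ ↔ ∃ s ∈ l, x ∈ s := by
  induction l with
  | nil => simp
  | cons s l ih => simp [ih]

theorem FOTerm.mem_vars_func {x : V} {f : F} {ts : List (FOTerm V C F)} :
    x ∈ (FOTerm.func f ts).vars ↔ ∃ t ∈ ts, x ∈ t.vars := by
  simp [FOTerm.vars, List.map_attach_eq_pmap, mem_foldr_union]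

noncomputable def FOTerm.size : FOTerm V C F → ℕ
  | .var _ => 1
  | .const _ => 1
  | .func _ ts => 1 + (ts.attach.map fun ⟨t, _⟩ => t.size).sum

theorem FOTerm.size_func (f : F) (ts : List (FOTerm V C F)) :
    (FOTerm.func f ts).size = 1 + (ts.map FOTerm.size).sum := by
  simp [FOTerm.size, List.map_attach_eq_pmap]

theorem FOTerm.one_le_size (t : FOTerm V C F) : 1 ≤ t.size := by
  cases t <;> simp [FOTerm.size]

theorem FOTerm.size_lt_of_mem {t : FOTerm V C F} {ts : List (FOTerm V C F)} {f : F}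
    (h : t ∈ ts) : t.size < (FOTerm.func f ts).size := by
  rw [FOTerm.size_func]
  have : t.size ≤ (ts.map FOTerm.size).sum :=
    List.single_le_sum (fun x _ => Nat.zero_le x) _ (List.mem_map.mpr ⟨t, h, rfl⟩)
  omega

theorem FOTerm.eq_var_of_nofunc_mem_vars {t : FOTerm V C F} (h : t.NoFunc) {x : V}
    (hx : x ∈ t.vars) : t = .var x := by
  cases t with
  | var v => simp [FOTerm.vars] at hx; subst hx; rfl
  | const c => simp [FOTerm.vars] at hx
  | func f ts => exact absurd h (by simp [FOTerm.NoFunc])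

theorem FOTerm.exists_func {t : FOTerm V C F} (hf : t.Functional) (hs : t.Shallow) :
    ∃ f ts, t = .func f ts ∧ ∀ u ∈ ts, u.NoFunc := by
  cases t with
  | var v => exact absurd trivial hf
  | const c => exact absurd trivial hf
  | func f ts => exact ⟨f, ts, rfl, hs⟩

theorem FOTerm.Functional.subst' {t : FOTerm V C F} (h : t.Functional)
    (δ : V → FOTerm V C F) : (t.subst δ).Functional := by
  cases t with
  | var v => exact absurd trivial h
  | const c => exact absurd trivial h
  | func f ts => rw [FOTerm.subst_func]; simp [FOTerm.Functional, FOTerm.NoFunc]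

theorem FOTerm.shallow_of_nofunc {t : FOTerm V C F} (h : t.NoFunc) : t.Shallow := by
  cases t <;> trivial

theorem FOTerm.shallow_subst {θ : V → FOTerm V C F} {t : FOTerm V C F} (ht : t.Shallow)
    (h : ∀ x ∈ t.vars, (θ x).NoFunc) : (t.subst θ).Shallow := by
  cases t with
  | var v => rw [FOTerm.subst_var]; exact FOTerm.shallow_of_nofunc (h v (by simp [FOTerm.vars]))
  | const c => rw [FOTerm.subst_const]; trivial
  | func f ts =>
    rw [FOTerm.subst_func]
    simp only [FOTerm.Shallow]
    intro u hu
    obtain ⟨u', hu', rfl⟩ := List.mem_map.mp hu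
    have hnf : u'.NoFunc := ht u' hu'
    cases u' with
    | var x => rw [FOTerm.subst_var]; exact h x (FOTerm.mem_vars_func.mpr ⟨.var x, hu', by simp [FOTerm.vars]⟩)
    | const c => rw [FOTerm.subst_const]; trivial
    | func g us => exact absurd hnf (by simp [FOTerm.NoFunc])

open Classical in
noncomputable def collapse (S : Set V) (θ : V → FOTerm V C F) : FOTerm V C F → FOTerm V C F
  | .var v => .var v
  | .const c => .const c
  | .func f ts =>
      if h : ∃ v, v ∈ S ∧ θ v = .func f ts then .var h.choose
      else .func f (ts.attach.map fun ⟨t, _⟩ => collapse S θ t)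

theorem collapse_nofunc (S : Set V) (θ : V → FOTerm V C F) {v : V} (hv : v ∈ S) :
    (collapse S θ (θ v)).NoFunc := by
  cases h : θ v with
  | var x => simp [collapse, FOTerm.NoFunc]
  | const c => simp [collapse, FOTerm.NoFunc]
  | func f ts =>
    rw [collapse, dif_pos ⟨v, hv, h⟩]
    trivial

theorem collapse_subst (S : Set V) (θ : V → FOTerm V C F) {t : FOTerm V C F}
    (ht : t.Shallow)
    (hnc : ∀ f ts, t = FOTerm.func f ts → ∀ w ∈ S, θ w ≠ t.subst θ) :
    collapse S θ (t.subst θ) = t.subst (fun v => collapse S θ (θ v)) := by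
  cases t with
  | var v => rw [FOTerm.subst_var, FOTerm.subst_var]
  | const c => rw [FOTerm.subst_const, FOTerm.subst_const, collapse]
  | func f ts =>
    rw [FOTerm.subst_func, FOTerm.subst_func, collapse, dif_neg]
    · congr 1
      rw [List.map_attach_eq_pmap, List.pmap_eq_map, List.map_map]
      apply List.map_congr_left
      intro u hu
      have hnf : u.NoFunc := ht u hu
      cases u with
      | var x => simp [Function.comp, FOTerm.subst_var]
      | const c => simp [Function.comp, FOTerm.subst_const, collapse]
      | func g us => exact absurd hnf (by simp [FOTerm.NoFunc])
    · rintro ⟨v, hv, heq⟩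
      exact hnc f ts rfl v hv (by rw [heq, FOTerm.subst_func])


theorem noclashX {ι : Type} {X : Set V} {a : ι → FOTerm V C F}
    (haX : ∀ i, (a i).vars ⊆ X)
    (has : ∀ i, (a i).Shallow)
    (hall : ∀ i, (a i).Functional → X ⊆ (a i).vars)
    {θ : V → FOTerm V C F} {i : ι} (hif : (a i).Functional)
    {w : V} (hw : w ∈ X) : θ w ≠ (a i).subst θ := by
  obtain ⟨f, us, heq, hus⟩ := FOTerm.exists_func hif (has i)
  intro hcl
  have hvw : FOTerm.var w ∈ us := by
    have : w ∈ (a i).vars := hall i hif hw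
    rw [heq] at this
    obtain ⟨u, hu, hwu⟩ := FOTerm.mem_vars_func.mp this
    have := FOTerm.eq_var_of_nofunc_mem_vars (hus u hu) hwu
    rwa [← this]
  have : (θ w).size < ((a i).subst θ).size := by
    rw [heq, FOTerm.subst_func]
    exact FOTerm.size_lt_of_mem
      (List.mem_map.mpr ⟨FOTerm.var w, hvw, FOTerm.subst_var θ w⟩)
  rw [← hcl] at this
  exact lt_irrefl _ this

theorem noclash2 {ι : Type} {X Y : Set V} {a b : ι → FOTerm V C F}
    (haX : ∀ i, (a i).vars ⊆ X)
    (has : ∀ i, (a i).Shallow) (hbs : ∀ i, (b i).Shallow)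
    (hall : ∀ i, (a i).Functional → X ⊆ (a i).vars)
    (hball : ∀ i, (b i).Functional → Y ⊆ (b i).vars)
    (hbf : ∃ i, (b i).Functional)
    {θ : V → FOTerm V C F}
    (harg : ∀ i, (a i).subst θ = (b i).subst θ)
    {i : ι} (hif : (a i).Functional)
    {w : V} (hw : w ∈ X ∪ Y) : θ w ≠ (a i).subst θ := by
  rcases hw with hw | hw
  · exact noclashX haX has hall hif hw
  intro hcl
  obtain ⟨f, us, heqa, hus⟩ := FOTerm.exists_func hif (has i)
  -- every θ-image of an X-variable is strictly smaller than θ w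
  have hsub : ∀ x ∈ X, (θ x).size < (θ w).size := by
    intro x hx
    have hvx : FOTerm.var x ∈ us := by
      have : x ∈ (a i).vars := hall i hif hx
      rw [heqa] at this
      obtain ⟨u, hu, hxu⟩ := FOTerm.mem_vars_func.mp this
      have := FOTerm.eq_var_of_nofunc_mem_vars (hus u hu) hxu
      rwa [← this]
    rw [hcl, heqa, FOTerm.subst_func]
    exact FOTerm.size_lt_of_mem
      (List.mem_map.mpr ⟨FOTerm.var x, hvx, FOTerm.subst_var θ x⟩)
  obtain ⟨j, hjf⟩ := hbf
  obtain ⟨g, vs, heqb, hvs⟩ := FOTerm.exists_func hjf (hbs j)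
  have hvw : FOTerm.var w ∈ vs := by
    have : w ∈ (b j).vars := hball j hjf hw
    rw [heqb] at this
    obtain ⟨u, hu, hwu⟩ := FOTerm.mem_vars_func.mp this
    have := FOTerm.eq_var_of_nofunc_mem_vars (hvs u hu) hwu
    rwa [← this]
  have hlt : (θ w).size < ((a j).subst θ).size := by
    rw [harg j, heqb, FOTerm.subst_func]
    exact FOTerm.size_lt_of_mem
      (List.mem_map.mpr ⟨FOTerm.var w, hvw, FOTerm.subst_var θ w⟩)
  -- the w-image is functional
  have hwf : θ w = FOTerm.func f (us.map (FOTerm.subst θ)) := by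
    rw [hcl, heqa, FOTerm.subst_func]
  cases hja : a j with
  | var x =>
    have hxX : x ∈ X := haX j (by rw [hja]; simp [FOTerm.vars])
    rw [hja, FOTerm.subst_var] at hlt
    exact absurd (hsub x hxX) (by omega)
  | const c =>
    rw [hja, FOTerm.subst_const] at hlt
    have := FOTerm.one_le_size (θ w)
    simp [FOTerm.size] at hlt
    omega
  | func f' us' =>
    have hbj : (b j).subst θ = FOTerm.func g (vs.map (FOTerm.subst θ)) := by
      rw [heqb, FOTerm.subst_func]
    have haj : (a j).subst θ = FOTerm.func f' (us'.map (FOTerm.subst θ)) := by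
      rw [hja, FOTerm.subst_func]
    have hmaps : us'.map (FOTerm.subst θ) = vs.map (FOTerm.subst θ) := by
      have h2 := (harg j)
      rw [haj, hbj] at h2
      exact (FOTerm.func.injEq _ _ _ _).mp h2 |>.2
    have hmem : θ w ∈ us'.map (FOTerm.subst θ) := by
      rw [hmaps]
      exact List.mem_map.mpr ⟨FOTerm.var w, hvw, FOTerm.subst_var θ w⟩
    obtain ⟨u, hu, huw⟩ := List.mem_map.mp hmem
    have hunf : u.NoFunc := by
      have := has j; rw [hja] at this; exact this u hu
    cases u with
    | var x =>
      have hxX : x ∈ X := haX j (by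
        rw [hja]
        exact FOTerm.mem_vars_func.mpr ⟨FOTerm.var x, hu, by simp [FOTerm.vars]⟩)
      rw [FOTerm.subst_var] at huw
      have := hsub x hxX
      rw [huw] at this
      exact lt_irrefl _ this
    | const c =>
      rw [FOTerm.subst_const] at huw
      rw [hwf] at huw
      cases huw
    | func g' vs' => exact absurd hunf (by simp [FOTerm.NoFunc])



/-- Let `H` and `B'` be simple atoms over disjoint variable sets `X` and `Y`,
`H` functional with every functional term containing all of `X`, and `B'`
either function-free with `vars B' = Y` or functional with every functional
term containing all of `Y`.  If `θ` is an mgu of `H` and `B'`, then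
`Hθ = B'θ` is simple, and the `θ`-image of every variable of a functional
atom among `H`, `B'` is non-functional. -/
theorem mgu_simple_atoms (X Y : Set V) (hXY : Disjoint X Y)
    (H B' : FOAtom V C F R ar)
    (hHX : H.vars ⊆ X) (hB'Y : B'.vars ⊆ Y)
    (hHsimple : H.Simple) (hB'simple : B'.Simple)
    (hHfunc : H.Functional)
    (hHall : ∀ i, (H.args i).Functional → X ⊆ (H.args i).vars)
    (hB' : (B'.NoFunc ∧ B'.vars = Y) ∨
      (B'.Functional ∧ ∀ i, (B'.args i).Functional → Y ⊆ (B'.args i).vars))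
    (θ : V → FOTerm V C F)
    (hunif : H.subst θ = B'.subst θ)
    (hmgu : ∀ σ : V → FOTerm V C F, H.subst σ = B'.subst σ →
      ∃ δ : V → FOTerm V C F, ∀ x : V, (θ x).subst δ = σ x) :
    (H.subst θ).Simple ∧ (B'.subst θ).Simple ∧
    (∀ A : FOAtom V C F R ar, (A = H ∨ A = B') → A.Functional →
      ∀ v ∈ A.vars, (θ v).NoFunc) := by
  classical
  obtain ⟨rH, aH⟩ := H
  obtain ⟨rB, aB⟩ := B'
  obtain rfl : rH = rB := congrArg FOAtom.rel hunif
  have harg : ∀ i, (aH i).subst θ = (aB i).subst θ := by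
    have h2 := hunif
    simp only [FOAtom.subst, FOAtom.mk.injEq, heq_eq_eq, true_and] at h2
    exact fun i => congrFun h2 i
  have haX : ∀ i, (aH i).vars ⊆ X :=
    fun i => (Set.subset_iUnion (fun i => (aH i).vars) i).trans hHX
  have hbY : ∀ i, (aB i).vars ⊆ Y :=
    fun i => (Set.subset_iUnion (fun i => (aB i).vars) i).trans hB'Y
  have hHvars : ∀ {v : V}, v ∈ FOAtom.vars ⟨rH, aH⟩ → ∃ i, v ∈ (aH i).vars :=
    fun hv => Set.mem_iUnion.mp hv
  -- Step 1: find S with X ⊆ S such that θ maps S to non-functional terms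
  have key : ∃ S : Set V, X ⊆ S ∧
      ((FOAtom.Functional ⟨rH, aB⟩) → Y ⊆ S) ∧ ∀ v ∈ S, (θ v).NoFunc := by
    -- choose S according to the case
    have main : ∀ S : Set V,
        (∀ i f ts, aH i = FOTerm.func f ts → ∀ w ∈ S, θ w ≠ (aH i).subst θ) →
        (∀ i f ts, aB i = FOTerm.func f ts → ∀ w ∈ S, θ w ≠ (aB i).subst θ) →
        ∀ v ∈ S, (θ v).NoFunc := by
      intro S hnca hncb v hv
      set σ : V → FOTerm V C F := fun v => collapse S θ (θ v) with hσ
      have hcol : ∀ i, (aH i).subst σ = (aB i).subst σ := by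
        intro i
        rw [← collapse_subst S θ (hHsimple i) (hnca i),
          ← collapse_subst S θ (hB'simple i) (hncb i), harg i]
      have hs_unif : FOAtom.subst σ ⟨rH, aH⟩ = FOAtom.subst σ ⟨rH, aB⟩ := by
        simp only [FOAtom.subst]
        exact congrArg (FOAtom.mk rH) (funext hcol)
      obtain ⟨δ, hδ⟩ := hmgu σ hs_unif
      by_contra hf
      have h1 : ((θ v).subst δ).Functional := FOTerm.Functional.subst' hf δ
      rw [hδ v] at h1
      exact h1 (collapse_nofunc S θ hv)
    rcases hB' with ⟨hbnf, -⟩ | ⟨hbf, hball⟩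
    · refine ⟨X, le_refl _, ?_, ?_⟩
      · intro hfb
        obtain ⟨i, hif⟩ := hfb
        exact absurd (hbnf i) hif
      · refine main X ?_ ?_
        · intro i f ts hfe w hw
          exact noclashX haX hHsimple hHall (by rw [hfe]; simp [FOTerm.Functional, FOTerm.NoFunc]) hw
        · intro i f ts hfe w hw
          exact absurd (hbnf i) (by show ¬(aB i).NoFunc; rw [hfe]; simp [FOTerm.NoFunc])
    · refine ⟨X ∪ Y, Set.subset_union_left, fun _ => Set.subset_union_right, ?_⟩
      refine main (X ∪ Y) ?_ ?_
      · intro i f ts hfe w hw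
        exact noclash2 haX hHsimple hB'simple hHall hball hbf harg
          (by rw [hfe]; simp [FOTerm.Functional, FOTerm.NoFunc]) hw
      · intro i f ts hfe w hw
        have harg' : ∀ i, (aB i).subst θ = (aH i).subst θ := fun i => (harg i).symm
        exact noclash2 hbY hB'simple hHsimple hball hHall hHfunc harg'
          (by rw [hfe]; simp [FOTerm.Functional, FOTerm.NoFunc])
          (by rwa [Set.union_comm] at hw)
  obtain ⟨S, hXS, hYS, hkey⟩ := key
  have hXnf : ∀ v ∈ X, (θ v).NoFunc := fun v hv => hkey v (hXS hv)
  have hsimple1 : (FOAtom.subst θ ⟨rH, aH⟩).Simple := by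
    intro i
    apply FOTerm.shallow_subst (hHsimple i)
    intro x hx
    exact hXnf x (haX i hx)
  refine ⟨hsimple1, ?_, ?_⟩
  · rw [← hunif]; exact hsimple1
  · rintro A (rfl | rfl) hAf v hv
    · obtain ⟨i, hi⟩ := hHvars hv
      exact hXnf v (haX i hi)
    · obtain ⟨i, hi⟩ := Set.mem_iUnion.mp hv
      exact hkey v (hYS hAf (hbY i hi))


end Stmt17
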